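/- arXiv:1410.1124 — 2 statements merged into one kernel-verified Lean document; each statement's English description precedes it below -/
import Mathlib

section
/- There exists a family (ω_C), indexed by the chambers of the arrangement defined by Σ, of functions ω_C : V → [0,1] satisfying: (1) for every chamber C and every X₀ ∈ V there exists c ∈ ℝ such that for all X ∈ V and all α ∈ Σ_C, if α(X − X₀) < c then ω_C(X) = 0; and (2) Σ_C ω_C(X) = 1 for every X ∈ V, the sum running over all chambers C. -/
open Set

/-- The set of regular points of the arrangement defined by the finite set `S`
of linear forms: the complement of the union of the kernels. -/
def regularSet {V : Type*} [NormedAddCommGroup V] [NormedSpace ℝ V]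
    (S : Finset (V →ₗ[ℝ] ℝ)) : Set V :=
  {v | ∀ α ∈ S, α v ≠ 0}

/-- A chamber of the arrangement defined by `S` is a connected component of the
set of regular points. -/
def IsChamber {V : Type*} [NormedAddCommGroup V] [NormedSpace ℝ V]
    (S : Finset (V →ₗ[ℝ] ℝ)) (C : Set V) : Prop :=
  ∃ x ∈ regularSet S, C = connectedComponentIn (regularSet S) x

/-- `posForms S C` is the set `Σ_C` of elements of `S` that are positive on `C`. -/
def posForms {V : Type*} [NormedAddCommGroup V] [NormedSpace ℝ V]
    (S : Finset (V →ₗ[ℝ] ℝ)) (C : Set V) : Set (V →ₗ[ℝ] ℝ) :=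
  {α | α ∈ S ∧ ∀ x ∈ C, 0 < α x}

/-- A real vector space is not covered by finitely many hyperplanes: there is a
vector on which all the (nonzero) forms in `S` are nonzero. -/
theorem exists_generic {V : Type*} [AddCommGroup V] [Module ℝ V]
    (S : Finset (V →ₗ[ℝ] ℝ)) (hne : ∀ α ∈ S, α ≠ 0) :
    ∃ e : V, ∀ α ∈ S, α e ≠ 0 := by
  classical
  induction S using Finset.induction with
  | empty => exact ⟨0, by simp⟩
  | insert α S hα ih =>
    obtain ⟨e, he⟩ := ih fun β hβ => hne β (Finset.mem_insert_of_mem hβ)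
    have hα0 : α ≠ 0 := hne α (Finset.mem_insert_self _ _)
    obtain ⟨v, hv⟩ : ∃ v, α v ≠ 0 := by
      by_contra h
      push_neg at h
      exact hα0 (LinearMap.ext fun x => h x)
    obtain ⟨t, ht⟩ := Infinite.exists_notMem_finset
      ((insert α S).image fun β => -(β e) / (β v))
    refine ⟨e + t • v, ?_⟩
    intro β hβ h
    rw [map_add, map_smul, smul_eq_mul] at h
    by_cases hβv : β v = 0
    · have hβS : β ∈ S := by
        rcases Finset.mem_insert.1 hβ with rfl | hβS
        · exact absurd hβv hv
        · exact hβS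
      rw [hβv, mul_zero, add_zero] at h
      exact he β hβS h
    · apply ht
      refine Finset.mem_image.2 ⟨β, hβ, ?_⟩
      field_simp
      linarith

/-- There exists a family `(ω_C)` indexed by the chambers, with values in `[0,1]`,
satisfying: (1) for each chamber `C` and each `X₀` there is `c ∈ ℝ` such that
`ω_C(X) = 0` as soon as `α(X − X₀) < c` for some `α ∈ Σ_C`; and
(2) `∑_C ω_C(X) = 1` for all `X`. -/
theorem exists_omega_family {V : Type*}
    [NormedAddCommGroup V] [NormedSpace ℝ V] [FiniteDimensional ℝ V]
    (S : Finset (V →ₗ[ℝ] ℝ))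
    (hne : ∀ α ∈ S, α ≠ 0) (hsymm : ∀ α ∈ S, -α ∈ S) :
    ∃ ω : Set V → V → ℝ,
      (∀ C : Set V, IsChamber S C → ∀ X : V, ω C X ∈ Set.Icc (0 : ℝ) 1) ∧
      (∀ C : Set V, IsChamber S C → ∀ X₀ : V, ∃ c : ℝ, ∀ X : V,
        ∀ α ∈ posForms S C, α (X - X₀) < c → ω C X = 0) ∧
      (∀ X : V, ∑ᶠ C ∈ {C : Set V | IsChamber S C}, ω C X = 1) := by
  classical
  obtain ⟨e, he⟩ := exists_generic S hne
  -- for each X, a small positive t such that adding t•e does not change nonzero signs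
  have key : ∀ X : V, ∃ t : ℝ, 0 < t ∧ ∀ α ∈ S, α X ≠ 0 → t * |α e| < |α X| := by
    intro X
    set T := S.filter (fun α => α X ≠ 0) with hT
    rcases T.eq_empty_or_nonempty with h | h
    · refine ⟨1, one_pos, fun α hα hαX => ?_⟩
      have hmem : α ∈ T := Finset.mem_filter.2 ⟨hα, hαX⟩
      rw [h] at hmem
      exact absurd hmem (Finset.notMem_empty α)
    · set m := T.inf' h (fun α => |α X| / |α e|) with hm
      have hm0 : 0 < m := by
        rw [hm]
        apply (Finset.lt_inf'_iff h).2
        intro α hα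
        have hα' := Finset.mem_filter.1 hα
        exact div_pos (abs_pos.2 hα'.2) (abs_pos.2 (he α hα'.1))
      refine ⟨m / 2, by linarith, fun α hα hαX => ?_⟩
      have h1 : m ≤ |α X| / |α e| := Finset.inf'_le _ (Finset.mem_filter.2 ⟨hα, hαX⟩)
      have h2 : 0 < |α e| := abs_pos.2 (he α hα)
      have h3 : 0 < |α X| := abs_pos.2 hαX
      have h4 : m * |α e| ≤ |α X| := (le_div_iff₀ h2).1 h1
      nlinarith
  choose t ht0 htlt using key
  -- the perturbation map
  set g : V → V := fun X => X + t X • e with hg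
  have hreg : ∀ X : V, g X ∈ regularSet S := by
    intro X α hα
    have hαg : α (g X) = α X + t X * α e := by simp [hg, map_add, map_smul, smul_eq_mul]
    rcases eq_or_ne (α X) 0 with h0 | h0
    · rw [hαg, h0, zero_add]
      exact mul_ne_zero (ne_of_gt (ht0 X)) (he α hα)
    · have hlt := htlt X α hα h0
      rw [hαg]
      rcases h0.lt_or_gt with hneg | hpos
      · have : t X * α e ≤ t X * |α e| :=
          mul_le_mul_of_nonneg_left (le_abs_self _) (le_of_lt (ht0 X))
        have habs : |α X| = -(α X) := abs_of_neg hneg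
        intro hzero; nlinarith
      · have : -(t X * |α e|) ≤ t X * α e := by
          have := mul_le_mul_of_nonneg_left (neg_abs_le (α e)) (le_of_lt (ht0 X))
          linarith [this]
        have habs : |α X| = α X := abs_of_pos hpos
        intro hzero; nlinarith
  have hpos : ∀ X : V, ∀ α ∈ S, 0 < α (g X) → 0 ≤ α X := by
    intro X α hα hαg
    by_contra hneg
    push_neg at hneg
    have hlt := htlt X α hα (ne_of_lt hneg)
    have habs : |α X| = -(α X) := abs_of_neg hneg
    have h1 : α (g X) = α X + t X * α e := by simp [hg, map_add, map_smul, smul_eq_mul]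
    have h2 : t X * α e ≤ t X * |α e| :=
      mul_le_mul_of_nonneg_left (le_abs_self _) (le_of_lt (ht0 X))
    nlinarith
  refine ⟨fun C X => if g X ∈ C then 1 else 0, ?_, ?_, ?_⟩
  · intro C _ X
    dsimp only
    split <;> norm_num
  · intro C hC X₀
    refine ⟨-(1 + ∑ α ∈ S, |α X₀|), fun X α hα hlt => ?_⟩
    have hαS : α ∈ S := hα.1
    have hsum : |α X₀| ≤ ∑ β ∈ S, |β X₀| :=
      Finset.single_le_sum (f := fun β => |β X₀|) (fun β _ => abs_nonneg _) hαS
    have hαX : α X < 0 := by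
      have : α (X - X₀) = α X - α X₀ := map_sub α X X₀
      have habs : α X₀ ≤ |α X₀| := le_abs_self _
      rw [this] at hlt
      linarith
    dsimp only
    rw [if_neg]
    intro hgC
    have := hpos X α hαS (hα.2 _ hgC)
    linarith
  · intro X
    set C₀ := connectedComponentIn (regularSet S) (g X) with hC₀def
    have hC₀ : IsChamber S C₀ := ⟨g X, hreg X, rfl⟩
    have hmemC₀ : g X ∈ C₀ := mem_connectedComponentIn (hreg X)
    have hsets : {C : Set V | IsChamber S C} ∩
        Function.support (fun C : Set V => if g X ∈ C then (1 : ℝ) else 0) =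
        ({C₀} : Set (Set V)) ∩
        Function.support (fun C : Set V => if g X ∈ C then (1 : ℝ) else 0) := by
      ext C
      simp only [Set.mem_inter_iff, Function.mem_support, Set.mem_setOf_eq,
        Set.mem_singleton_iff]
      constructor
      · rintro ⟨⟨y, hy, rfl⟩, hsupp⟩
        have hgmem : g X ∈ connectedComponentIn (regularSet S) y := by
          by_contra h
          exact hsupp (if_neg h)
        exact ⟨(connectedComponentIn_eq hgmem).symm ▸ rfl, hsupp⟩
      · rintro ⟨rfl, hsupp⟩
        exact ⟨hC₀, hsupp⟩
    calc ∑ᶠ C ∈ {C : Set V | IsChamber S C}, (if g X ∈ C then (1 : ℝ) else 0)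
        = ∑ᶠ C ∈ ({C₀} : Set (Set V)), (if g X ∈ C then (1 : ℝ) else 0) := by
          apply finsum_mem_inter_support_eq
          exact hsets
      _ = 1 := by rw [finsum_mem_singleton, if_pos hmemC₀]
end

section
/- Let (ω_C) be a family, indexed by the chambers of the arrangement defined by Σ, of functions ω_C : V → [0,1] satisfying: (1) for every chamber C and every X₀ ∈ V there exists c ∈ ℝ such that for all X ∈ V and all α ∈ Σ_C, if α(X − X₀) < c then ω_C(X) = 0; and (2) Σ_C ω_C(X) = 1 for every X ∈ V, the sum running over all chambers C. Then the family also satisfies: (3) for every chamber C and every X₀ ∈ V there exists c ∈ ℝ such that ω_C(X) = 1 for every X ∈ V with α(X − X₀) > c for all α ∈ Σ_C. -/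
open Set

section Aux

set_option linter.unusedSectionVars false

variable {V : Type*} [NormedAddCommGroup V] [NormedSpace ℝ V] [FiniteDimensional ℝ V]

def signClass (S : Finset (V →ₗ[ℝ] ℝ)) (x : V) : Set V :=
  {v | ∀ α ∈ S, 0 < α x * α v}

lemma signClass_subset_regular (S : Finset (V →ₗ[ℝ] ℝ)) (x : V) :
    signClass S x ⊆ regularSet S := by
  intro v hv α hα h0
  have := hv α hα
  rw [h0, mul_zero] at this
  exact lt_irrefl 0 this

lemma mem_signClass_self {S : Finset (V →ₗ[ℝ] ℝ)} {x : V} (hx : x ∈ regularSet S) :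
    x ∈ signClass S x :=
  fun α hα => mul_self_pos.mpr (hx α hα)

lemma isOpen_signClass (S : Finset (V →ₗ[ℝ] ℝ)) (x : V) :
    IsOpen (signClass S x) := by
  have : signClass S x = ⋂ α ∈ S, {v | 0 < α x * α v} := by
    ext v; simp [signClass, mem_iInter]
  rw [this]
  refine isOpen_biInter_finset fun α hα => ?_
  have hc : Continuous fun v => α x * α v :=
    continuous_const.mul α.continuous_of_finiteDimensional
  exact isOpen_lt continuous_const hc

lemma convex_signClass (S : Finset (V →ₗ[ℝ] ℝ)) (x : V) :
    Convex ℝ (signClass S x) := by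
  have : signClass S x = ⋂ α ∈ S, {v | 0 < α x * α v} := by
    ext v; simp [signClass, mem_iInter]
  rw [this]
  refine convex_iInter fun α => convex_iInter fun hα => ?_
  have : {v : V | 0 < α x * α v} = {v | 0 < (α x • α) v} := by
    ext v; simp [smul_eq_mul]
  rw [this]
  exact convex_halfSpace_gt (LinearMap.isLinear _) 0


lemma connectedComponentIn_eq_signClass {S : Finset (V →ₗ[ℝ] ℝ)} {x : V}
    (hx : x ∈ regularSet S) :
    connectedComponentIn (regularSet S) x = signClass S x := by
  apply subset_antisymm
  · set U := signClass S x with hU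
    set W := {y : V | ∃ α ∈ S, α x * α y < 0} with hW
    have hUo : IsOpen U := isOpen_signClass S x
    have hWo : IsOpen W := by
      have : W = ⋃ α ∈ S, {y : V | α x * α y < 0} := by
        ext y; simp [hW]
      rw [this]
      exact isOpen_biUnion fun α hα => isOpen_lt
        (continuous_const.mul α.continuous_of_finiteDimensional) continuous_const
    have hdis : Disjoint U W := by
      rw [Set.disjoint_left]
      rintro y hy ⟨α, hα, hneg⟩
      exact absurd (hy α hα) (not_lt.mpr hneg.le)
    have hsub : connectedComponentIn (regularSet S) x ⊆ U ∪ W := by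
      intro y hy
      have hyreg : y ∈ regularSet S := connectedComponentIn_subset _ _ hy
      by_cases h : y ∈ U
      · exact Or.inl h
      · right
        simp only [hU, signClass, Set.mem_setOf_eq, not_forall] at h
        obtain ⟨α, hα, hnp⟩ := h
        refine ⟨α, hα, ?_⟩
        rcases lt_trichotomy (α x * α y) 0 with h' | h' | h'
        · exact h'
        · exact absurd (mul_eq_zero.mp h') (by push_neg; exact ⟨hx α hα, hyreg α hα⟩)
        · exact absurd h' hnp
    exact (isPreconnected_connectedComponentIn).subset_left_of_subset_union hUo hWo hdis hsub
      ⟨x, mem_connectedComponentIn hx, mem_signClass_self hx⟩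
  · exact (convex_signClass S x).isPreconnected.subset_connectedComponentIn
      (mem_signClass_self hx) (signClass_subset_regular S x)

lemma pos_on_signClass {S : Finset (V →ₗ[ℝ] ℝ)} {x : V} {α : V →ₗ[ℝ] ℝ}
    (hα : α ∈ S) (hpos : 0 < α x) : ∀ v ∈ signClass S x, 0 < α v := by
  intro v hv
  have h := hv α hα
  rcases mul_pos_iff.mp h with ⟨_, h2⟩ | ⟨h1, _⟩
  · exact h2
  · exact absurd hpos (not_lt.mpr h1.le)

lemma signClass_subset_of_signs {S : Finset (V →ₗ[ℝ] ℝ)} {x y : V}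
    (h : ∀ α ∈ S, 0 < α x * α y) : signClass S x ⊆ signClass S y := by
  intro v hv α hα
  have h1 := h α hα
  have h2 := hv α hα
  rcases mul_pos_iff.mp h1 with ⟨a, b⟩ | ⟨a, b⟩ <;>
    rcases mul_pos_iff.mp h2 with ⟨c, d⟩ | ⟨c, d⟩
  · exact mul_pos b d
  · exact absurd a (not_lt.mpr c.le)
  · exact absurd c (not_lt.mpr a.le)
  · exact mul_pos_of_neg_of_neg b d

lemma signClass_eq_of_signs {S : Finset (V →ₗ[ℝ] ℝ)} {x y : V}
    (h : ∀ α ∈ S, 0 < α x * α y) : signClass S x = signClass S y :=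
  subset_antisymm (signClass_subset_of_signs h)
    (signClass_subset_of_signs fun α hα => by rw [mul_comm]; exact h α hα)

lemma separation {S : Finset (V →ₗ[ℝ] ℝ)} (hsymm : ∀ α ∈ S, -α ∈ S) {x y : V}
    (hx : x ∈ regularSet S) (hy : y ∈ regularSet S)
    (hne : signClass S x ≠ signClass S y) :
    ∃ α ∈ S, α x < 0 ∧ 0 < α y := by
  by_contra hcon
  push_neg at hcon
  apply hne
  apply signClass_eq_of_signs
  intro α hα
  rcases (hx α hα).lt_or_gt with hx' | hx'
  · rcases (hy α hα).lt_or_gt with hy' | hy'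
    · exact mul_pos_of_neg_of_neg hx' hy'
    · exact absurd hy' (not_lt.mpr (hcon α hα hx'))
  · rcases (hy α hα).lt_or_gt with hy' | hy'
    · have h1 := hcon (-α) (hsymm α hα) (by simpa using hx')
      simp only [LinearMap.neg_apply, neg_nonpos] at h1
      exact absurd hy' (not_lt.mpr (by linarith))
    · exact mul_pos hx' hy'

lemma chambers_finite (S : Finset (V →ₗ[ℝ] ℝ)) :
    {C : Set V | IsChamber S C}.Finite := by
  have hsub : {C : Set V | IsChamber S C} ⊆
      Set.range (fun ε : S → Bool =>
        {v : V | ∀ α : S, if ε α then 0 < (α : V →ₗ[ℝ] ℝ) v else (α : V →ₗ[ℝ] ℝ) v < 0}) := by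
    rintro C ⟨x, hx, rfl⟩
    refine ⟨fun α => decide (0 < (α : V →ₗ[ℝ] ℝ) x), ?_⟩
    rw [connectedComponentIn_eq_signClass hx]
    ext v
    simp only [Set.mem_setOf_eq, decide_eq_true_eq]
    constructor
    · intro h α hα
      have := h ⟨α, hα⟩
      by_cases hs : 0 < α x
      · rw [if_pos hs] at this
        exact mul_pos hs this
      · rw [if_neg hs] at this
        exact mul_pos_of_neg_of_neg ((hx α hα).lt_or_gt.resolve_right hs) this
    · rintro h ⟨α, hα⟩
      by_cases hs : 0 < α x
      · simp only [if_pos hs]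
        exact pos_on_signClass hα hs v h
      · simp only [if_neg hs]
        rcases mul_pos_iff.mp (h α hα) with ⟨a, _⟩ | ⟨_, b⟩
        · exact absurd a hs
        · exact b
  exact Set.Finite.subset (Set.finite_range _) hsub

end Aux

/-- If a family `(ω_C)` with values in `[0,1]` satisfies conditions (1) and (2) of
section 1.1, then it satisfies (3): for each chamber `C` and each `X₀` there is
`c ∈ ℝ` such that `ω_C(X) = 1` whenever `α(X − X₀) > c` for all `α ∈ Σ_C`. -/
theorem omega_family_condition_three {V : Type*}
    [NormedAddCommGroup V] [NormedSpace ℝ V] [FiniteDimensional ℝ V]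
    (S : Finset (V →ₗ[ℝ] ℝ))
    (hne : ∀ α ∈ S, α ≠ 0) (hsymm : ∀ α ∈ S, -α ∈ S)
    (ω : Set V → V → ℝ)
    (hrange : ∀ C : Set V, IsChamber S C → ∀ X : V, ω C X ∈ Set.Icc (0 : ℝ) 1)
    (h1 : ∀ C : Set V, IsChamber S C → ∀ X₀ : V, ∃ c : ℝ, ∀ X : V,
      ∀ α ∈ posForms S C, α (X - X₀) < c → ω C X = 0)
    (h2 : ∀ X : V, ∑ᶠ C ∈ {C : Set V | IsChamber S C}, ω C X = 1) :
    ∀ C : Set V, IsChamber S C → ∀ X₀ : V, ∃ c : ℝ, ∀ X : V,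
      (∀ α ∈ posForms S C, c < α (X - X₀)) → ω C X = 1 := by
  intro C hC X₀
  obtain ⟨xC, hxC, hCeq⟩ := hC
  have hCsign : C = signClass S xC := hCeq.trans (connectedComponentIn_eq_signClass hxC)
  have hfin := chambers_finite S
  have hsel : ∀ D : Set V, ∃ c : ℝ, IsChamber S D →
      ∀ X, ∀ α ∈ posForms S D, α (X - X₀) < c → ω D X = 0 := by
    intro D
    by_cases hD : IsChamber S D
    · obtain ⟨c, hc⟩ := h1 D hD X₀
      exact ⟨c, fun _ => hc⟩
    · exact ⟨0, fun h => absurd h hD⟩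
  choose cD hcD using hsel
  obtain ⟨c, hc⟩ := (hfin.toFinset.image fun D => -cD D).exists_le
  refine ⟨c, fun X hX => ?_⟩
  have hCmem : C ∈ hfin.toFinset := hfin.mem_toFinset.mpr ⟨xC, hxC, hCeq⟩
  have hzero : ∀ D ∈ hfin.toFinset, D ≠ C → ω D X = 0 := by
    intro D hDmem hDne
    have hD : IsChamber S D := hfin.mem_toFinset.mp hDmem
    obtain ⟨y, hy, hDeq⟩ := hD
    have hDsign : D = signClass S y := hDeq.trans (connectedComponentIn_eq_signClass hy)
    have hnecls : signClass S xC ≠ signClass S y := by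
      intro h
      exact hDne (by rw [hDsign, hCsign, h])
    obtain ⟨α, hα, hxneg, hypos⟩ := separation hsymm hxC hy hnecls
    have hαD : α ∈ posForms S D := ⟨hα, by rw [hDsign]; exact pos_on_signClass hα hypos⟩
    have hαC : (-α) ∈ posForms S C := by
      refine ⟨hsymm α hα, ?_⟩
      rw [hCsign]
      exact pos_on_signClass (hsymm α hα) (by simpa using hxneg)
    have h3 := hX (-α) hαC
    simp only [LinearMap.neg_apply] at h3
    have h5 : -cD D ≤ c := hc _ (Finset.mem_image_of_mem _ hDmem)
    exact hcD D (hfin.mem_toFinset.mp hDmem) X α hαD (by linarith)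
  have hsum := h2 X
  rw [← hfin.coe_toFinset, finsum_mem_coe_finset] at hsum
  rwa [Finset.sum_eq_single_of_mem C hCmem hzero] at hsum
end
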